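/- Suppose Φ_x, Φ_u, φ_x, φ_u satisfy (I - ZA)Φ_x - ZB·Φ_u = I and (I - ZA)φ_x - ZB·φ_u = Z·s, with Φ_x invertible. Define K = Φ_u·Φ_x^{-1} and u_s = φ_u - Φ_u·Φ_x^{-1}·φ_x. Then Φ_x·Z(B·u_s + s) = φ_x, i.e., the affine state response defined by this controller equals φ_x. -/
import Mathlib


/-- If the affine SLS constraints hold and Φ_x is invertible, then
with K = Φ_u·Φ_x⁻¹ and u_s = φ_u - Φ_u·Φ_x⁻¹·φ_x, the affine state response
Φ_x·Z(B·u_s + s) equals φ_x. -/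
theorem affine_sls_state_response_achieved (n m T : ℕ)
    (Z A : Matrix (Fin (T + 1) × Fin n) (Fin (T + 1) × Fin n) ℝ)
    (B : Matrix (Fin (T + 1) × Fin n) (Fin (T + 1) × Fin m) ℝ)
    (Φx : Matrix (Fin (T + 1) × Fin n) (Fin (T + 1) × Fin n) ℝ)
    (Φu : Matrix (Fin (T + 1) × Fin m) (Fin (T + 1) × Fin n) ℝ)
    (φx s : Fin (T + 1) × Fin n → ℝ) (φu : Fin (T + 1) × Fin m → ℝ)
    (hΦx : IsUnit Φx)
    (hsub : (1 - Z * A) * Φx - Z * B * Φu = 1)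
    (hsubaff : (1 - Z * A).mulVec φx - (Z * B).mulVec φu = Z.mulVec s) :
    let us := φu - (Φu * Φx⁻¹).mulVec φx
    Φx.mulVec (Z.mulVec (B.mulVec us + s)) = φx := by
  intro us
  have hdet : IsUnit Φx.det := (Matrix.isUnit_iff_isUnit_det Φx).mp hΦx
  have hinv : Φx * Φx⁻¹ = 1 := Matrix.mul_nonsing_inv Φx hdet
  have h1 : Z * B * Φu = (1 - Z * A) * Φx - 1 := by
    have := sub_eq_iff_eq_add.mp hsub
    rw [this]; abel
  have h2 : Z * B * Φu * Φx⁻¹ = (1 - Z * A) - Φx⁻¹ := by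
    rw [h1, Matrix.sub_mul, Matrix.mul_assoc, hinv, Matrix.mul_one, Matrix.one_mul]
  have key : Z.mulVec (B.mulVec us + s) = Φx⁻¹.mulVec φx := by
    have hZs : Z.mulVec s = (1 - Z * A).mulVec φx - (Z * B).mulVec φu := hsubaff.symm
    simp only [us, Matrix.mulVec_add, Matrix.mulVec_sub, Matrix.mulVec_mulVec, hZs]
    rw [show Z * (B * (Φu * Φx⁻¹)) = (1 - Z * A) - Φx⁻¹ by
      rw [← h2, Matrix.mul_assoc, Matrix.mul_assoc]]
    simp only [Matrix.sub_mulVec]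
    abel
  rw [key, Matrix.mulVec_mulVec, hinv, Matrix.one_mulVec]
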